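/- Let u : P → Q be a Kummer homomorphism of saturated commutative monoids and let R be a commutative ring. Then there is an isomorphism of R-algebras R[Q ⊕_P^sat Q] ≅ R[Q] ⊗_R R[Q^gp/P^gp], where R[−] denotes the monoid algebra over R; under the identification Q ⊕_P^sat Q ≅ Q ⊕ (Q^gp/P^gp), the isomorphism is induced by the decomposition of the monoid into the direct sum of Q and Q^gp/P^gp. -/

import Mathlib

open scoped TensorProduct

noncomputable section

/-- The subgroup `{(u^gp x, -u^gp x) : x ∈ P^gp}` of `Q^gp × Q^gp`; the pushout
`Q^gp ⊕_{P^gp} Q^gp` is the quotient by this subgroup. -/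
def pushKer {GP GQ : Type*} [AddCommGroup GP] [AddCommGroup GQ]
    (ugp : GP →+ GQ) : AddSubgroup (GQ × GQ) :=
  (ugp.prod (-ugp)).range

/-- The saturated pushout `Q ⊕_P^sat Q`: the submonoid of `Q^gp ⊕_{P^gp} Q^gp`
consisting of the classes `ξ` such that `m • ξ` lies in the image of `Q × Q` for some
integer `m > 0`. -/
def satPushout {Q GP GQ : Type*} [AddCancelCommMonoid Q]
    [AddCommGroup GP] [AddCommGroup GQ]
    (ιQ : Q →+ GQ) (ugp : GP →+ GQ) :
    AddSubmonoid ((GQ × GQ) ⧸ pushKer ugp) where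
  carrier := {ξ | ∃ m : ℕ, 0 < m ∧ ∃ a b : Q,
    m • ξ = QuotientAddGroup.mk' (pushKer ugp) (ιQ a, ιQ b)}
  zero_mem' := ⟨1, one_pos, 0, 0, by simp; exact (QuotientAddGroup.mk_zero _).symm⟩
  add_mem' := by
    rintro ξ η ⟨m, hm, a, b, h⟩ ⟨k, hk, c, d, h'⟩
    refine ⟨m * k, Nat.mul_pos hm hk, k • a + m • c, k • b + m • d, ?_⟩
    have h1 : (m * k) • (ξ + η) = k • (m • ξ) + m • (k • η) := by
      have h2 := smul_add (m * k) ξ η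
      rw [h2, ← mul_smul, ← mul_smul, mul_comm k m]
    rw [h1, h, h', ← map_nsmul, ← map_nsmul, ← map_add]
    congr 1
    simp [Prod.ext_iff, map_add, map_nsmul]


namespace SatAux

variable (R M N : Type*) [CommRing R] [AddCommMonoid M] [AddCommMonoid N]

/-- `(m, n) ↦ single m 1 ⊗ single n 1` as a monoid hom. -/
def tmulHom : Multiplicative (M × N) →*
    (AddMonoidAlgebra R M ⊗[R] AddMonoidAlgebra R N) where
  toFun p := AddMonoidAlgebra.single p.toAdd.1 (1 : R) ⊗ₜ[R]
      AddMonoidAlgebra.single p.toAdd.2 (1 : R)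
  map_one' := by
    simp only [Algebra.TensorProduct.one_def]
    rfl
  map_mul' p q := by
    show AddMonoidAlgebra.single (p.toAdd.1 + q.toAdd.1) (1 : R) ⊗ₜ[R]
        AddMonoidAlgebra.single (p.toAdd.2 + q.toAdd.2) (1 : R) = _
    rw [Algebra.TensorProduct.tmul_mul_tmul, AddMonoidAlgebra.single_mul_single,
      AddMonoidAlgebra.single_mul_single, one_mul]

/-- Forward algebra hom. -/
def fwd : AddMonoidAlgebra R (M × N) →ₐ[R]
    (AddMonoidAlgebra R M ⊗[R] AddMonoidAlgebra R N) :=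
  AddMonoidAlgebra.lift R _ (M × N) (tmulHom R M N)

/-- Backward algebra hom. -/
def bwd : (AddMonoidAlgebra R M ⊗[R] AddMonoidAlgebra R N) →ₐ[R]
    AddMonoidAlgebra R (M × N) :=
  Algebra.TensorProduct.productMap
    (AddMonoidAlgebra.mapDomainAlgHom R R (AddMonoidHom.inl M N))
    (AddMonoidAlgebra.mapDomainAlgHom R R (AddMonoidHom.inr M N))

lemma fwd_single (p : M × N) :
    fwd R M N (AddMonoidAlgebra.single p (1 : R)) =
      AddMonoidAlgebra.single p.1 (1 : R) ⊗ₜ[R] AddMonoidAlgebra.single p.2 (1 : R) := by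
  rw [fwd, AddMonoidAlgebra.lift_single, one_smul]
  rfl

/-- The algebra equivalence `R[M × N] ≃ R[M] ⊗ R[N]`. -/
def prodTensorEquiv : AddMonoidAlgebra R (M × N) ≃ₐ[R]
    (AddMonoidAlgebra R M ⊗[R] AddMonoidAlgebra R N) :=
  AlgEquiv.ofAlgHom (fwd R M N) (bwd R M N)
    (by
      apply Algebra.TensorProduct.ext
      · apply AddMonoidAlgebra.algHom_ext
        intro a
        simp only [AlgHom.restrictScalars_apply, AlgHom.coe_comp, Function.comp_apply, Algebra.TensorProduct.includeLeft_apply, AlgHom.coe_id, id_eq]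
        rw [bwd, Algebra.TensorProduct.productMap_apply_tmul, map_one, mul_one,
          AddMonoidAlgebra.mapDomainAlgHom_apply, AddMonoidAlgebra.mapDomain_single, fwd_single]
        exact congrArg (fun z => AddMonoidAlgebra.single a (1 : R) ⊗ₜ[R] z)
          AddMonoidAlgebra.one_def.symm
        exact Subsingleton.elim _ _
      · apply AddMonoidAlgebra.algHom_ext
        intro a
        simp only [AlgHom.restrictScalars_apply, AlgHom.coe_comp, Function.comp_apply, Algebra.TensorProduct.includeRight_apply, AlgHom.coe_id, id_eq]
        rw [bwd, Algebra.TensorProduct.productMap_apply_tmul, map_one, one_mul,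
          AddMonoidAlgebra.mapDomainAlgHom_apply, AddMonoidAlgebra.mapDomain_single, fwd_single]
        exact congrArg (fun z => z ⊗ₜ[R] AddMonoidAlgebra.single a (1 : R))
          AddMonoidAlgebra.one_def.symm
        exact Subsingleton.elim _ _)
    (by
      apply AddMonoidAlgebra.algHom_ext
      intro p
      simp only [AlgHom.coe_comp, Function.comp_apply, AlgHom.coe_id, id_eq]
      rw [fwd_single, bwd, Algebra.TensorProduct.productMap_apply_tmul,
        AddMonoidAlgebra.mapDomainAlgHom_apply, AddMonoidAlgebra.mapDomainAlgHom_apply,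
        AddMonoidAlgebra.mapDomain_single, AddMonoidAlgebra.mapDomain_single,
        AddMonoidAlgebra.single_mul_single, one_mul]
      simp
      exact Subsingleton.elim _ _)

lemma prodTensorEquiv_single (p : M × N) :
    prodTensorEquiv R M N (AddMonoidAlgebra.single p (1 : R)) =
      AddMonoidAlgebra.single p.1 (1 : R) ⊗ₜ[R] AddMonoidAlgebra.single p.2 (1 : R) :=
  fwd_single R M N p

end SatAux
section Main

variable {P Q GP GQ : Type*} [AddCancelCommMonoid P] [AddCancelCommMonoid Q]
    [AddCommGroup GP] [AddCommGroup GQ]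

/-- The "sum" homomorphism `(GQ × GQ) ⧸ pushKer ugp →+ GQ`. -/
def sigmaHom (ugp : GP →+ GQ) : ((GQ × GQ) ⧸ pushKer ugp) →+ GQ :=
  QuotientAddGroup.lift (pushKer ugp)
    ((AddMonoidHom.fst GQ GQ) + (AddMonoidHom.snd GQ GQ))
    (by rintro x ⟨p, rfl⟩; simp)

@[simp] lemma sigmaHom_mk (ugp : GP →+ GQ) (x : GQ × GQ) :
    sigmaHom ugp (QuotientAddGroup.mk' (pushKer ugp) x) = x.1 + x.2 :=
  rfl

/-- The second-projection homomorphism to `GQ ⧸ ugp.range`. -/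
def piHom (ugp : GP →+ GQ) : ((GQ × GQ) ⧸ pushKer ugp) →+ (GQ ⧸ ugp.range) :=
  QuotientAddGroup.lift (pushKer ugp)
    ((QuotientAddGroup.mk' ugp.range).comp (AddMonoidHom.snd GQ GQ))
    (by
      rintro x ⟨p, rfl⟩
      rw [AddMonoidHom.mem_ker]
      simp only [AddMonoidHom.coe_comp, Function.comp_apply, AddMonoidHom.coe_snd,
        AddMonoidHom.prod_apply, AddMonoidHom.neg_apply]
      rw [QuotientAddGroup.mk'_apply, QuotientAddGroup.eq_zero_iff]
      exact ⟨-p, by simp⟩)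

@[simp] lemma piHom_mk (ugp : GP →+ GQ) (x : GQ × GQ) :
    piHom ugp (QuotientAddGroup.mk' (pushKer ugp) x) =
      QuotientAddGroup.mk' ugp.range x.2 :=
  rfl

/-- `h ↦ [(-h, h)]` descends to `GQ ⧸ ugp.range`. -/
def tauHom (ugp : GP →+ GQ) : (GQ ⧸ ugp.range) →+ ((GQ × GQ) ⧸ pushKer ugp) :=
  QuotientAddGroup.lift ugp.range
    ((QuotientAddGroup.mk' (pushKer ugp)).comp
      ((-AddMonoidHom.id GQ).prod (AddMonoidHom.id GQ)))
    (by
      rintro x ⟨p, rfl⟩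
      rw [AddMonoidHom.mem_ker]
      simp only [AddMonoidHom.coe_comp, Function.comp_apply, AddMonoidHom.prod_apply,
        AddMonoidHom.neg_apply, AddMonoidHom.id_apply]
      rw [QuotientAddGroup.mk'_apply, QuotientAddGroup.eq_zero_iff]
      exact ⟨-p, by simp⟩)

@[simp] lemma tauHom_mk (ugp : GP →+ GQ) (h : GQ) :
    tauHom ugp (QuotientAddGroup.mk' ugp.range h) =
      QuotientAddGroup.mk' (pushKer ugp) (-h, h) :=
  rfl

/-- `q ↦ [(ιQ q, 0)]`. -/
def rhoHom (ιQ : Q →+ GQ) (ugp : GP →+ GQ) : Q →+ ((GQ × GQ) ⧸ pushKer ugp) :=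
  (QuotientAddGroup.mk' (pushKer ugp)).comp (ιQ.prod 0)

@[simp] lemma rhoHom_apply (ιQ : Q →+ GQ) (ugp : GP →+ GQ) (q : Q) :
    rhoHom ιQ ugp q = QuotientAddGroup.mk' (pushKer ugp) (ιQ q, 0) :=
  rfl

end Main
/-- Let `u : P → Q` be a Kummer homomorphism of saturated commutative
monoids, with group completions `ιP : P →+ GP`, `ιQ : Q →+ GQ` and induced map
`ugp : GP →+ GQ`, and let `R` be a commutative ring.  Then there is an `R`-algebra
isomorphism `R[Q ⊕_P^sat Q] ≅ R[Q] ⊗_R R[Q^gp/P^gp]`; under the identification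
`Q ⊕_P^sat Q ≅ Q ⊕ (Q^gp/P^gp)`, `(class of (g₁, g₂)) ↦ (q, ḡ₂)` with `ιQ q = g₁ + g₂`,
the isomorphism is induced by the decomposition of the monoid into the direct sum. -/
theorem monoidAlgebra_saturated_pushout_tensor_decomposition
    {P Q GP GQ : Type*} [AddCancelCommMonoid P] [AddCancelCommMonoid Q]
    [AddCommGroup GP] [AddCommGroup GQ]
    (R : Type*) [CommRing R]
    (ιP : P →+ GP) (ιQ : Q →+ GQ)
    (hιP : Function.Injective ιP) (hιQ : Function.Injective ιQ)
    (hgpP : ∀ g : GP, ∃ a b : P, g = ιP a - ιP b)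
    (hgpQ : ∀ g : GQ, ∃ a b : Q, g = ιQ a - ιQ b)
    (hsatP : ∀ g : GP, ∀ n : ℕ, 0 < n → (∃ a : P, n • g = ιP a) → ∃ a : P, g = ιP a)
    (hsatQ : ∀ g : GQ, ∀ n : ℕ, 0 < n → (∃ a : Q, n • g = ιQ a) → ∃ a : Q, g = ιQ a)
    (u : P →+ Q) (huinj : Function.Injective u)
    (hkummer : ∀ q : Q, ∃ n : ℕ, 0 < n ∧ ∃ x : P, n • q = u x)
    (ugp : GP →+ GQ) (hugp : ∀ x : P, ugp (ιP x) = ιQ (u x)) :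
    ∃ (ψ : ↥(satPushout ιQ ugp) ≃+ Q × (GQ ⧸ ugp.range))
      (e : AddMonoidAlgebra R ↥(satPushout ιQ ugp) ≃ₐ[R]
        (AddMonoidAlgebra R Q ⊗[R] AddMonoidAlgebra R (GQ ⧸ ugp.range))),
      (∀ (ξ : ↥(satPushout ιQ ugp)) (g₁ g₂ : GQ),
        (ξ : (GQ × GQ) ⧸ pushKer ugp) = QuotientAddGroup.mk' (pushKer ugp) (g₁, g₂) →
        ιQ (ψ ξ).1 = g₁ + g₂ ∧ (ψ ξ).2 = QuotientAddGroup.mk' ugp.range g₂) ∧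
      (∀ s : ↥(satPushout ιQ ugp),
        e (AddMonoidAlgebra.single s 1) =
          AddMonoidAlgebra.single (ψ s).1 1 ⊗ₜ[R] AddMonoidAlgebra.single (ψ s).2 1) := by
  classical
  -- torsion of `GQ ⧸ ugp.range`
  have htor : ∀ g : GQ, ∃ m : ℕ, 0 < m ∧ ∃ y : GP, m • g = ugp y := by
    intro g
    obtain ⟨c, d, rfl⟩ := hgpQ g
    obtain ⟨n, hn, x, hx⟩ := hkummer c
    obtain ⟨n', hn', x', hx'⟩ := hkummer d
    refine ⟨n * n', Nat.mul_pos hn hn', ιP (n' • x) - ιP (n • x'), ?_⟩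
    have hc : (n * n') • c = u (n' • x) := by
      rw [mul_comm, mul_smul, hx, ← map_nsmul]
    have hd : (n * n') • d = u (n • x') := by
      rw [mul_smul, hx', ← map_nsmul]
    rw [smul_sub, ← map_nsmul, ← map_nsmul, hc, hd, map_sub, hugp, hugp]
  -- membership criterion for `satPushout`
  have hmem : ∀ g₁ g₂ : GQ, (∃ q : Q, ιQ q = g₁ + g₂) →
      QuotientAddGroup.mk' (pushKer ugp) (g₁, g₂) ∈ satPushout ιQ ugp := by
    rintro g₁ g₂ ⟨q, hq⟩
    obtain ⟨m, hm, y, hy⟩ := htor g₂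
    refine ⟨m, hm, m • q, 0, ?_⟩
    rw [← map_nsmul]
    rw [QuotientAddGroup.mk'_apply, QuotientAddGroup.mk'_apply, QuotientAddGroup.eq_iff_sub_mem]
    refine ⟨-y, ?_⟩
    have h1 : m • g₁ - ιQ (m • q) = -(m • g₂) := by
      rw [map_nsmul, hq, smul_add]
      abel
    show (ugp (-y), -ugp (-y)) = _
    rw [Prod.smul_mk, Prod.mk_sub_mk, map_zero, sub_zero, map_neg, neg_neg, h1, hy]
  -- the first component exists
  have hsum : ∀ ξ : ↥(satPushout ιQ ugp), ∃ q : Q, ιQ q = sigmaHom ugp (ξ : (GQ × GQ) ⧸ pushKer ugp) := by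
    rintro ⟨ξ, m, hm, a, b, h⟩
    have h2 : m • sigmaHom ugp ξ = ιQ (a + b) := by
      rw [← map_nsmul, h, sigmaHom_mk, ← map_add]
    obtain ⟨q, hq⟩ := hsatQ (sigmaHom ugp ξ) m hm ⟨a + b, h2⟩
    exact ⟨q, hq.symm⟩
  set σ := sigmaHom ugp with hσ
  set π := piHom ugp with hπ
  set τ := tauHom ugp with hτ
  set ρ := rhoHom ιQ ugp with hρ
  -- the chosen first component
  let qOf : ↥(satPushout ιQ ugp) → Q := fun ξ => (hsum ξ).choose
  have hqOf : ∀ ξ, ιQ (qOf ξ) = σ (ξ : (GQ × GQ) ⧸ pushKer ugp) := fun ξ => (hsum ξ).choose_spec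
  -- the inverse map lands in the saturated pushout
  have hinv_mem : ∀ (q : Q) (n : GQ ⧸ ugp.range), ρ q + τ n ∈ satPushout ιQ ugp := by
    intro q n
    induction n using QuotientAddGroup.induction_on with
    | H h =>
      have : ρ q + τ ((h : GQ ⧸ ugp.range)) =
          QuotientAddGroup.mk' (pushKer ugp) (ιQ q - h, h) := by
        rw [hρ, hτ, rhoHom_apply, ← QuotientAddGroup.mk'_apply ugp.range, tauHom_mk, ← map_add]
        congr 1
        rw [Prod.mk_add_mk, zero_add, ← sub_eq_add_neg]
      rw [this]
      exact hmem _ _ ⟨q, by abel⟩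
  have hτmk : ∀ h : GQ, τ ((h : GQ ⧸ ugp.range)) = QuotientAddGroup.mk' (pushKer ugp) (-h, h) := by
    intro h
    rw [hτ, ← QuotientAddGroup.mk'_apply ugp.range, tauHom_mk]
  -- construct ψ
  let fwd : ↥(satPushout ιQ ugp) → Q × (GQ ⧸ ugp.range) :=
    fun ξ => (qOf ξ, π (ξ : (GQ × GQ) ⧸ pushKer ugp))
  let bwd : Q × (GQ ⧸ ugp.range) → ↥(satPushout ιQ ugp) :=
    fun p => ⟨ρ p.1 + τ p.2, hinv_mem p.1 p.2⟩
  have hσρ : ∀ q' : Q, σ (ρ q') = ιQ q' := by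
    intro q'
    rw [hρ, rhoHom_apply, hσ, sigmaHom_mk, add_zero]
  have hστ : ∀ n' : GQ ⧸ ugp.range, σ (τ n') = 0 := by
    intro n'
    induction n' using QuotientAddGroup.induction_on with
    | H h => rw [hτmk, hσ, sigmaHom_mk]; simp
  have hπρ : ∀ q' : Q, π (ρ q') = 0 := by
    intro q'
    rw [hρ, rhoHom_apply, hπ, piHom_mk, QuotientAddGroup.mk'_apply, QuotientAddGroup.eq_zero_iff]
    exact zero_mem _
  have hπτ : ∀ n' : GQ ⧸ ugp.range, π (τ n') = n' := by
    intro n'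
    induction n' using QuotientAddGroup.induction_on with
    | H h => rw [hτmk, hπ, piHom_mk]; rfl
  have hleft : ∀ ξ, bwd (fwd ξ) = ξ := by
    rintro ⟨ξ, hξ⟩
    induction ξ using QuotientAddGroup.induction_on with
    | H g =>
      apply Subtype.ext
      show ρ (qOf ⟨_, hξ⟩) + τ (π _) = _
      have hπg : π ((g : (GQ × GQ) ⧸ pushKer ugp)) = ((g.2 : GQ ⧸ ugp.range)) := rfl
      rw [hπg, hτmk, hρ, rhoHom_apply, ← map_add]
      have hq : ιQ (qOf ⟨(g : (GQ × GQ) ⧸ pushKer ugp), hξ⟩) = g.1 + g.2 := by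
        rw [hqOf]
        rfl
      rw [QuotientAddGroup.mk'_apply]
      have h3 : (ιQ (qOf ⟨(g : (GQ × GQ) ⧸ pushKer ugp), hξ⟩), (0 : GQ)) + (-g.2, g.2)
          = (g.1, g.2) := by
        rw [Prod.mk_add_mk, hq, zero_add]
        refine congrArg (fun z => (z, g.2)) ?_
        abel
      rw [h3]
  have hright : ∀ p, fwd (bwd p) = p := by
    rintro ⟨q, n⟩
    have h1 : qOf (bwd (q, n)) = q := by
      apply hιQ
      rw [hqOf]
      show σ (ρ q + τ n) = ιQ q
      rw [map_add, hσρ, hστ, add_zero]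
    have h2 : π ((bwd (q, n) : (GQ × GQ) ⧸ pushKer ugp)) = n := by
      show π (ρ q + τ n) = n
      rw [map_add, hπρ, hπτ, zero_add]
    show (qOf (bwd (q, n)), π _) = (q, n)
    rw [h1, h2]
  have hadd : ∀ ξ η, fwd (ξ + η) = fwd ξ + fwd η := by
    intro ξ η
    have h1 : qOf (ξ + η) = qOf ξ + qOf η := by
      apply hιQ
      rw [map_add, hqOf, hqOf, hqOf, AddSubmonoid.coe_add, map_add]
    show (qOf (ξ + η), π _) = (qOf ξ, π _) + (qOf η, π _)
    rw [Prod.mk_add_mk, h1, AddSubmonoid.coe_add, map_add]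
  refine ⟨{ toFun := fwd, invFun := bwd, left_inv := hleft, right_inv := hright,
            map_add' := hadd },
    (AddMonoidAlgebra.domCongr R R
      ({ toFun := fwd, invFun := bwd, left_inv := hleft, right_inv := hright,
         map_add' := hadd } : ↥(satPushout ιQ ugp) ≃+ Q × (GQ ⧸ ugp.range))).trans
      (SatAux.prodTensorEquiv R Q (GQ ⧸ ugp.range)), ?_, ?_⟩
  · rintro ξ g₁ g₂ hξ
    constructor
    · show ιQ (qOf ξ) = g₁ + g₂
      rw [hqOf, hξ, hσ, sigmaHom_mk]
    · show π (ξ : (GQ × GQ) ⧸ pushKer ugp) = _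
      rw [hξ, hπ, piHom_mk]
  · intro s
    rw [AlgEquiv.trans_apply, AddMonoidAlgebra.domCongr_single,
      SatAux.prodTensorEquiv_single]

end
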